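/- For any 0 ≤ Q ≤ 1, the function f(x) = 1 + φ(√(Q + (1-Q)(1-x²))) - φ(√(1-x²)) is monotonically decreasing in x on [0,1]. -/

import Mathlib

noncomputable def phi (x : ℝ) : ℝ :=
  1 - (1/2) * (1 + x) * Real.logb 2 (1 + x) - (1/2) * (1 - x) * Real.logb 2 (1 - x)

open Real

lemma phi_eq (x : ℝ) :
    phi x = 1 - ((1+x) * log (1+x) + (1-x) * log (1-x)) / (2 * log 2) := by
  have h2 : log 2 ≠ 0 := (log_pos one_lt_two).ne'
  unfold phi
  rw [Real.logb, Real.logb]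
  field_simp
  ring

lemma continuous_phi : Continuous phi := by
  have h : phi = fun x => 1 - ((1+x) * log (1+x) + (1-x) * log (1-x)) / (2 * log 2) :=
    funext phi_eq
  rw [h]
  exact continuous_const.sub
    (((Real.continuous_mul_log.comp (continuous_const.add continuous_id)).add
      (Real.continuous_mul_log.comp (continuous_const.sub continuous_id))).div_const _)

lemma hasDerivAt_phi {x : ℝ} (h1 : -1 < x) (h2 : x < 1) :
    HasDerivAt phi (-(log (1+x) - log (1-x)) / (2 * log 2)) x := by
  have hp : (1:ℝ) + x ≠ 0 := by linarith
  have hm : (1:ℝ) - x ≠ 0 := by linarith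
  have A : HasDerivAt (fun y : ℝ => (1+y) * log (1+y)) (log (1+x) + 1) x := by
    have := (Real.hasDerivAt_mul_log hp).comp x ((hasDerivAt_id x).const_add 1)
    simpa [Function.comp_def] using this
  have B : HasDerivAt (fun y : ℝ => (1-y) * log (1-y)) ((log (1-x) + 1) * (-1)) x := by
    have := (Real.hasDerivAt_mul_log hm).comp x ((hasDerivAt_id x).const_sub 1)
    simpa [Function.comp_def] using this
  have hphi : phi = fun y => 1 - ((1+y) * log (1+y) + (1-y) * log (1-y)) / (2 * log 2) :=
    funext phi_eq
  rw [hphi]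
  exact (((A.add B).div_const (2 * log 2)).const_sub 1).congr_deriv (by ring)

noncomputable def psi (t : ℝ) : ℝ := phi (Real.sqrt t)

lemma continuous_psi : Continuous psi := continuous_phi.comp continuous_sqrt

lemma hasDerivAt_psi {t : ℝ} (h0 : 0 < t) (h1 : t < 1) :
    HasDerivAt psi (-(log (1+√t) - log (1-√t)) / (2 * log 2) * (1/(2*√t))) t := by
  have hs0 : 0 < √t := sqrt_pos.2 h0
  have hs1 : √t < 1 := (sqrt_lt' one_pos).2 (by nlinarith)
  have := (hasDerivAt_phi (by linarith) hs1).comp t (Real.hasDerivAt_sqrt h0.ne')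
  show HasDerivAt (fun t => phi (Real.sqrt t)) _ t
  simpa [psi, Function.comp_def] using this

lemma hasDerivAt_log_one_add {x : ℝ} (h : -1 < x) :
    HasDerivAt (fun y : ℝ => log (1+y)) ((1+x)⁻¹) x := by
  have hp : (1:ℝ) + x ≠ 0 := by linarith
  have := (Real.hasDerivAt_log hp).comp x ((hasDerivAt_id x).const_add 1)
  simpa [Function.comp_def] using this

lemma hasDerivAt_log_one_sub {x : ℝ} (h : x < 1) :
    HasDerivAt (fun y : ℝ => log (1-y)) ((1-x)⁻¹ * (-1)) x := by
  have hm : (1:ℝ) - x ≠ 0 := by linarith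
  have := (Real.hasDerivAt_log hm).comp x ((hasDerivAt_id x).const_sub 1)
  simpa [Function.comp_def] using this

lemma two_mul_le_logs {s : ℝ} (h0 : 0 ≤ s) (h1 : s < 1) :
    2 * s ≤ log (1+s) - log (1-s) := by
  have hD : ∀ x ∈ Set.Ico (0:ℝ) 1,
      HasDerivAt (fun y : ℝ => log (1+y) - log (1-y) - 2*y)
        ((1+x)⁻¹ - (1-x)⁻¹ * (-1) - 2) x := by
    intro x hx
    exact ((hasDerivAt_log_one_add (by linarith [hx.1])).sub
      (hasDerivAt_log_one_sub hx.2)).sub ((hasDerivAt_id x).const_mul 2 |>.congr_deriv (by ring))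
  have hmono : MonotoneOn (fun y : ℝ => log (1+y) - log (1-y) - 2*y) (Set.Ico 0 1) := by
    apply monotoneOn_of_deriv_nonneg (convex_Ico 0 1)
    · exact fun x hx => (hD x hx).differentiableAt.continuousAt.continuousWithinAt
    · rw [interior_Ico]
      intro x hx
      exact (hD x ⟨hx.1.le, hx.2⟩).differentiableAt.differentiableWithinAt
    · rw [interior_Ico]
      intro x hx
      rw [(hD x ⟨hx.1.le, hx.2⟩).deriv]
      have hp : (0:ℝ) < 1 + x := by linarith [hx.1]
      have hm : (0:ℝ) < 1 - x := by linarith [hx.2]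
      have hprod : (0:ℝ) < (1+x)*(1-x) := by positivity
      have h2 : (2:ℝ) ≤ (1+x)⁻¹ + (1-x)⁻¹ := by
        rw [← sub_nonneg]
        have e1 : (1+x)⁻¹ + (1-x)⁻¹ - 2 = 2*x^2 / ((1+x)*(1-x)) := by
          field_simp
          ring
        rw [e1]
        exact div_nonneg (by positivity) hprod.le
      linarith
  have := hmono (Set.mem_Ico.2 ⟨le_refl 0, one_pos⟩) (Set.mem_Ico.2 ⟨h0, h1⟩) h0
  simpa using this

noncomputable def gfun (s : ℝ) : ℝ := (s⁻¹ - s) * (log (1+s) - log (1-s))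

lemma hasDerivAt_gfun {s : ℝ} (h0 : 0 < s) (h1 : s < 1) :
    HasDerivAt gfun
      ((-(s^2)⁻¹ - 1) * (log (1+s) - log (1-s))
        + (s⁻¹ - s) * ((1+s)⁻¹ - (1-s)⁻¹ * (-1))) s := by
  have hu : HasDerivAt (fun y : ℝ => y⁻¹ - y) (-(s^2)⁻¹ - 1) s :=
    (hasDerivAt_inv h0.ne').sub (hasDerivAt_id s)
  have hv : HasDerivAt (fun y : ℝ => log (1+y) - log (1-y)) ((1+s)⁻¹ - (1-s)⁻¹ * (-1)) s :=
    (hasDerivAt_log_one_add (by linarith)).sub (hasDerivAt_log_one_sub h1)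
  exact hu.mul hv

lemma g_anti : AntitoneOn gfun (Set.Ioo 0 1) := by
  apply antitoneOn_of_deriv_nonpos (convex_Ioo 0 1)
  · exact fun s hs =>
      (hasDerivAt_gfun hs.1 hs.2).differentiableAt.continuousAt.continuousWithinAt
  · rw [interior_Ioo]
    exact fun s hs => (hasDerivAt_gfun hs.1 hs.2).differentiableAt.differentiableWithinAt
  · rw [interior_Ioo]
    intro s hs
    rw [(hasDerivAt_gfun hs.1 hs.2).deriv]
    have h0 : 0 < s := hs.1
    have h1 : s < 1 := hs.2
    have hA := two_mul_le_logs h0.le h1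
    have hs2 : (0:ℝ) < s^2 := by positivity
    have hp : (0:ℝ) < 1 + s := by linarith
    have hm : (0:ℝ) < 1 - s := by linarith
    set A := log (1+s) - log (1-s) with hAdef
    have key : ((-(s^2)⁻¹ - 1) * A + (s⁻¹ - s) * ((1+s)⁻¹ - (1-s)⁻¹ * (-1))) * (s^2 * ((1+s)*(1-s)))
        = ((-(1 + s^2) * A) * ((1+s)*(1-s)) + 2*s*(1+s)*(1-s)) := by
      field_simp
      ring
    have hpm : (0:ℝ) < (1+s)*(1-s) := by positivity
    have hfac : (0:ℝ) < s^2 * ((1+s)*(1-s)) := by positivity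
    have hnum : (-(1 + s^2) * A) * ((1+s)*(1-s)) + 2*s*(1+s)*(1-s) ≤ 0 := by
      have h2 : (1 + s^2) * A ≥ (1 + s^2) * (2*s) := by nlinarith [sq_nonneg s]
      nlinarith [hpm, h2]
    have : ((-(s^2)⁻¹ - 1) * A + (s⁻¹ - s) * ((1+s)⁻¹ - (1-s)⁻¹ * (-1))) * (s^2 * ((1+s)*(1-s))) ≤ 0 := by
      rw [key]; exact hnum
    nlinarith [this, hfac]

lemma core_ineq {Q t : ℝ} (hQ0 : 0 ≤ Q) (hQ1 : Q < 1) (ht0 : 0 < t) (ht1 : t < 1) :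
    -(log (1+√t) - log (1-√t)) / (2 * log 2) * (1/(2*√t))
      - -(log (1+√(Q+(1-Q)*t)) - log (1-√(Q+(1-Q)*t))) / (2 * log 2)
        * (1/(2*√(Q+(1-Q)*t))) * (1-Q) ≤ 0 := by
  have ha0 : 0 < Q + (1-Q)*t := by nlinarith
  have ha1 : Q + (1-Q)*t < 1 := by nlinarith
  have hta : t ≤ Q + (1-Q)*t := by nlinarith
  have hst0 : 0 < √t := sqrt_pos.2 ht0
  have hsa0 : 0 < √(Q+(1-Q)*t) := sqrt_pos.2 ha0
  have hst1 : √t < 1 := (sqrt_lt' one_pos).2 (by nlinarith)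
  have hsa1 : √(Q+(1-Q)*t) < 1 := (sqrt_lt' one_pos).2 (by nlinarith)
  have hstsa : √t ≤ √(Q+(1-Q)*t) := sqrt_le_sqrt hta
  have hst2 : √t * √t = t := mul_self_sqrt ht0.le
  have hsa2 : √(Q+(1-Q)*t) * √(Q+(1-Q)*t) = Q+(1-Q)*t := mul_self_sqrt ha0.le
  have hg := g_anti ⟨hst0, hst1⟩ ⟨hsa0, hsa1⟩ hstsa
  set st := √t with hstdef
  set sa := √(Q+(1-Q)*t) with hsadef
  set At := log (1+st) - log (1-st) with hAt
  set Aa := log (1+sa) - log (1-sa) with hAa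
  have est : st⁻¹ - st = (1-t)/st := by
    rw [eq_div_iff hst0.ne']
    field_simp
    linarith [hst2]
  have esa : sa⁻¹ - sa = ((1-Q)*(1-t))/sa := by
    rw [eq_div_iff hsa0.ne']
    field_simp
    nlinarith [hsa2]
  have hg' : (1-Q)*(1-t)*(Aa/sa) ≤ (1-t)*(At/st) := by
    have e1 : gfun st = (1-t)*(At/st) := by
      simp only [gfun, ← hAt]
      rw [est]; ring
    have e2 : gfun sa = (1-Q)*(1-t)*(Aa/sa) := by
      simp only [gfun, ← hAa]
      rw [esa]; ring
    rw [e1, e2] at hg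
    exact hg
  have h1t : (0:ℝ) < 1 - t := by linarith
  have h4 : (1-Q)*(Aa/sa) ≤ At/st := by
    have h5 : (1-t) * ((1-Q)*(Aa/sa)) ≤ (1-t) * (At/st) := by
      calc (1-t) * ((1-Q)*(Aa/sa)) = (1-Q)*(1-t)*(Aa/sa) := by ring
      _ ≤ (1-t)*(At/st) := hg'
    exact le_of_mul_le_mul_left h5 h1t
  have hL : (0:ℝ) < log 2 := log_pos one_lt_two
  have efinal : -At / (2 * log 2) * (1/(2*st)) - -Aa / (2 * log 2) * (1/(2*sa)) * (1-Q)
      = ((1-Q)*(Aa/sa) - At/st) / (4 * log 2) := by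
    field_simp
    ring
  rw [efinal]
  apply div_nonpos_of_nonpos_of_nonneg (by linarith) (by positivity)

lemma hasDerivAt_h {Q t : ℝ} (hQ0 : 0 ≤ Q) (hQ1 : Q < 1) (ht0 : 0 < t) (ht1 : t < 1) :
    HasDerivAt (fun t => psi t - psi (Q + (1-Q)*t))
      (-(log (1+√t) - log (1-√t)) / (2 * log 2) * (1/(2*√t))
        - -(log (1+√(Q+(1-Q)*t)) - log (1-√(Q+(1-Q)*t))) / (2 * log 2)
          * (1/(2*√(Q+(1-Q)*t))) * (1-Q)) t := by
  have ha0 : 0 < Q + (1-Q)*t := by nlinarith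
  have ha1 : Q + (1-Q)*t < 1 := by nlinarith
  have inner : HasDerivAt (fun t : ℝ => Q + (1-Q)*t) (1-Q) t := by
    simpa using ((hasDerivAt_id t).const_mul (1-Q)).const_add Q
  have hc := (hasDerivAt_psi ha0 ha1).comp t inner
  exact (hasDerivAt_psi ht0 ht1).sub hc

lemma h_anti {Q : ℝ} (hQ0 : 0 ≤ Q) (hQ1 : Q ≤ 1) :
    AntitoneOn (fun t => psi t - psi (Q + (1-Q)*t)) (Set.Icc 0 1) := by
  by_cases hQ : Q = 1
  · have hfun : (fun t : ℝ => psi t - psi (Q + (1-Q)*t)) = fun t => psi t - psi 1 := by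
      subst hQ; funext t; norm_num
    rw [hfun]
    apply antitoneOn_of_deriv_nonpos (convex_Icc 0 1)
      ((continuous_psi.sub continuous_const).continuousOn)
    · rw [interior_Icc]
      exact fun t ht =>
        ((hasDerivAt_psi ht.1 ht.2).sub_const _).differentiableAt.differentiableWithinAt
    · rw [interior_Icc]
      intro t ht
      show deriv (fun x => psi x - psi 1) t ≤ 0
      rw [((hasDerivAt_psi ht.1 ht.2).sub_const _).deriv]
      have hst0 : 0 < √t := sqrt_pos.2 ht.1
      have hst1 : √t < 1 := (sqrt_lt' one_pos).2 (by nlinarith [ht.2])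
      have hA : 0 ≤ log (1+√t) - log (1-√t) := by
        have h1 := log_nonneg (by linarith : (1:ℝ) ≤ 1+√t)
        have h2 := log_nonpos (by linarith : (0:ℝ) ≤ 1-√t) (by linarith : (1:ℝ)-√t ≤ 1)
        linarith
      have hL : (0:ℝ) < log 2 := log_pos one_lt_two
      apply mul_nonpos_of_nonpos_of_nonneg
      · apply div_nonpos_of_nonpos_of_nonneg (by linarith) (by positivity)
      · positivity
  · have hQ1' : Q < 1 := lt_of_le_of_ne hQ1 hQ
    apply antitoneOn_of_deriv_nonpos (convex_Icc 0 1)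
    · exact (continuous_psi.sub (continuous_psi.comp
        (continuous_const.add (continuous_const.mul continuous_id)))).continuousOn
    · rw [interior_Icc]
      exact fun t ht =>
        (hasDerivAt_h hQ0 hQ1' ht.1 ht.2).differentiableAt.differentiableWithinAt
    · rw [interior_Icc]
      intro t ht
      rw [(hasDerivAt_h hQ0 hQ1' ht.1 ht.2).deriv]
      exact core_ineq hQ0 hQ1' ht.1 ht.2

theorem stmt_3 (Q : ℝ) (hQ0 : 0 ≤ Q) (hQ1 : Q ≤ 1) :
    AntitoneOn
      (fun x : ℝ => 1 + phi (Real.sqrt (Q + (1 - Q) * (1 - x^2))) - phi (Real.sqrt (1 - x^2)))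
      (Set.Icc 0 1) := by
  have hmain := h_anti hQ0 hQ1
  intro x1 hx1 x2 hx2 h12
  have hx10 := hx1.1
  have hx11 := hx1.2
  have hx20 := hx2.1
  have hx21 := hx2.2
  have ht1mem : 1 - x1^2 ∈ Set.Icc (0:ℝ) 1 := ⟨by nlinarith, by nlinarith⟩
  have ht2mem : 1 - x2^2 ∈ Set.Icc (0:ℝ) 1 := ⟨by nlinarith, by nlinarith⟩
  have hle : 1 - x2^2 ≤ 1 - x1^2 := by nlinarith
  have key := hmain ht2mem ht1mem hle
  simp only [psi] at key
  simp only
  linarith
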